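/- Let (μ_S)_{S∈L} be a consistent family of regular Borel probability measures on the members X_S of a compact Hausdorff projective family. Then there exists a unique regular Borel probability measure μ on the projective limit X̄ such that (p_S)_* μ = μ_S for every S ∈ L. -/

import Mathlib

open MeasureTheory

/-- The projective limit of a projective family, as a subspace of the product space. -/
def ProjLim {L : Type*} [PartialOrder L] (X : L → Type*)
    (p : ∀ S S', S ≤ S' → X S' → X S) : Type _ :=
  {x : ∀ S, X S // ∀ S S' (h : S ≤ S'), p S S' h (x S') = x S}

/-- The Tychonov (subspace-of-product) topology on the projective limit. -/
instance {L : Type*} [PartialOrder L] (X : L → Type*) [∀ S, TopologicalSpace (X S)]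
    (p : ∀ S S', S ≤ S' → X S' → X S) : TopologicalSpace (ProjLim X p) :=
  inferInstanceAs (TopologicalSpace {x : ∀ S, X S // ∀ S S' (h : S ≤ S'), p S S' h (x S') = x S})

namespace ProjLimAux

open Set TopologicalSpace
open scoped ENNReal NNReal

variable {L : Type*} [PartialOrder L]
    {X : L → Type*} [∀ S, TopologicalSpace (X S)]
    {p : ∀ S S', S ≤ S' → X S' → X S}

/-- The canonical projection. -/
def π (p : ∀ S S', S ≤ S' → X S' → X S) (S : L) : ProjLim X p → X S := fun x => x.1 S

lemma π_cont (S : L) : Continuous (π p S) :=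
  (continuous_apply S).comp continuous_subtype_val

lemma compat {S S' : L} (h : S ≤ S') (x : ProjLim X p) :
    p S S' h (π p S' x) = π p S x := x.2 S S' h

lemma plT2 [∀ S, T2Space (X S)] : T2Space (ProjLim X p) :=
  inferInstanceAs (T2Space {x : ∀ S, X S // ∀ S S' (h : S ≤ S'), p S S' h (x S') = x S})

lemma plClosed [∀ S, T2Space (X S)] (hp_cont : ∀ S S' (h : S ≤ S'), Continuous (p S S' h)) :
    IsClosed {x : ∀ S, X S | ∀ S S' (h : S ≤ S'), p S S' h (x S') = x S} := by
  have : {x : ∀ S, X S | ∀ S S' (h : S ≤ S'), p S S' h (x S') = x S}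
      = ⋂ (S) (S') (h : S ≤ S'), {x | p S S' h (x S') = x S} := by
    ext x; simp [Set.mem_iInter]
  rw [this]
  exact isClosed_iInter fun S => isClosed_iInter fun S' => isClosed_iInter fun h =>
    isClosed_eq ((hp_cont S S' h).comp (continuous_apply S')) (continuous_apply S)

lemma plCompact [∀ S, T2Space (X S)] [∀ S, CompactSpace (X S)]
    (hp_cont : ∀ S S' (h : S ≤ S'), Continuous (p S S' h)) :
    CompactSpace (ProjLim X p) :=
  isCompact_iff_compactSpace.mp (plClosed hp_cont).isCompact

variable [IsDirected L (· ≤ ·)]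

section Surj

variable [∀ S, CompactSpace (X S)] [∀ S, T2Space (X S)] [∀ S, Nonempty (X S)]
    (hp_cont : ∀ S S' (h : S ≤ S'), Continuous (p S S' h))
    (hp_surj : ∀ S S' (h : S ≤ S'), Function.Surjective (p S S' h))
    (hp_id : ∀ S, p S S le_rfl = id)
    (hp_comp : ∀ S S' S'' (h : S ≤ S') (h' : S' ≤ S''),
      p S S' h ∘ p S' S'' h' = p S S'' (h.trans h'))

include hp_cont hp_surj hp_id hp_comp in
lemma π_surj (S : L) : Function.Surjective (π p S) := by
  intro y
  let t : {U : L // S ≤ U} → Set (∀ T, X T) := fun U =>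
    {x | p S U.1 U.2 (x U.1) = y ∧ ∀ T (h : T ≤ U.1), x T = p T U.1 h (x U.1)}
  haveI : Nonempty {U : L // S ≤ U} := ⟨⟨S, le_rfl⟩⟩
  have hsub : ∀ (U V : {U : L // S ≤ U}) (h : U.1 ≤ V.1), t V ⊆ t U := by
    rintro U V h x ⟨hx1, hx2⟩
    have hU : x U.1 = p U.1 V.1 h (x V.1) := hx2 U.1 h
    constructor
    · rw [hU, ← Function.comp_apply (f := p S U.1 U.2), hp_comp S U.1 V.1 U.2 h, hx1]
    · intro T hT
      have := hx2 T (hT.trans h)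
      rw [this, hU, ← Function.comp_apply (f := p T U.1 hT), hp_comp T U.1 V.1 hT h]
  have htd : Directed (· ⊇ ·) t := by
    intro U V
    obtain ⟨W, hUW, hVW⟩ := directed_of (· ≤ ·) U.1 V.1
    exact ⟨⟨W, U.2.trans hUW⟩, hsub U ⟨W, U.2.trans hUW⟩ hUW, hsub V ⟨W, U.2.trans hUW⟩ hVW⟩
  have htn : ∀ U, (t U).Nonempty := by
    intro U
    obtain ⟨z, hz⟩ := hp_surj S U.1 U.2 y
    classical
    refine ⟨fun T => if h : T ≤ U.1 then p T U.1 h z else Classical.arbitrary (X T), ?_, ?_⟩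
    · simp only [dif_pos le_rfl]
      rw [show p U.1 U.1 le_rfl z = z from congrFun (hp_id U.1) z, hz]
    · intro T h
      simp only [dif_pos h, dif_pos le_rfl]
      rw [show p U.1 U.1 le_rfl z = z from congrFun (hp_id U.1) z]
  have htcl : ∀ U, IsClosed (t U) := by
    intro U
    have : t U = {x : ∀ T, X T | p S U.1 U.2 (x U.1) = y} ∩
        ⋂ (T) (h : T ≤ U.1), {x | x T = p T U.1 h (x U.1)} := by
      ext x; simp [t, Set.mem_iInter]
    rw [this]
    exact (isClosed_eq ((hp_cont S U.1 U.2).comp (continuous_apply U.1)) continuous_const).inter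
      (isClosed_iInter fun T => isClosed_iInter fun h =>
        isClosed_eq (continuous_apply T) ((hp_cont T U.1 h).comp (continuous_apply U.1)))
  obtain ⟨x, hx⟩ := IsCompact.nonempty_iInter_of_directed_nonempty_isCompact_isClosed t htd htn
    (fun U => (htcl U).isCompact) htcl
  simp only [Set.mem_iInter] at hx
  have hmem : ∀ T T' (h : T ≤ T'), p T T' h (x T') = x T := by
    intro T T' h
    obtain ⟨V, hTV, hSV⟩ := directed_of (· ≤ ·) T' S
    obtain ⟨hx1, hx2⟩ := hx ⟨V, hSV⟩
    rw [hx2 T' hTV, hx2 T (h.trans hTV), ← Function.comp_apply (f := p T T' h),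
      hp_comp T T' V h hTV]
  refine ⟨⟨x, hmem⟩, ?_⟩
  obtain ⟨hx1, _⟩ := hx ⟨S, le_rfl⟩
  have : p S S le_rfl (x S) = x S := congrFun (hp_id S) (x S)
  show x S = y; rw [← hx1, this]

end Surj

section Cyl

variable [Nonempty L]
    (hp_cont : ∀ S S' (h : S ≤ S'), Continuous (p S S' h))

include hp_cont in
/-- Basic cylinder neighborhoods: every point of an open set has a cylinder
neighborhood inside it. -/
lemma exists_cylinder_mem {U : Set (ProjLim X p)} (hU : IsOpen U) {x : ProjLim X p}
    (hx : x ∈ U) :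
    ∃ (S : L) (W : Set (X S)), IsOpen W ∧ x ∈ π p S ⁻¹' W ∧ π p S ⁻¹' W ⊆ U := by
  obtain ⟨V, hV, hVU⟩ := isOpen_induced_iff.mp hU
  have hxV : x.1 ∈ V := by rw [← hVU] at hx; exact hx
  obtain ⟨I, u, hu, hIV⟩ := isOpen_pi_iff.mp hV x.1 hxV
  obtain ⟨S, hS⟩ := I.exists_le
  refine ⟨S, ⋂ (a : {a // a ∈ I}), p a.1 S (hS a.1 a.2) ⁻¹' u a.1, ?_, ?_, ?_⟩
  · exact isOpen_iInter_of_finite fun a => (hu a.1 a.2).1.preimage (hp_cont a.1 S (hS a.1 a.2))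
  · simp only [Set.mem_preimage, Set.mem_iInter]
    intro a
    rw [compat (hS a.1 a.2) x]
    exact (hu a.1 a.2).2
  · intro z hz
    simp only [Set.mem_preimage, Set.mem_iInter] at hz
    have : z.1 ∈ V := by
      apply hIV
      intro a ha
      have := hz ⟨a, ha⟩
      rwa [compat (hS a ha) z] at this
    rw [← hVU]; exact this

include hp_cont in
/-- A compact set inside an open set can be enclosed by a single open cylinder. -/
lemma exists_cylinder (hp_comp : ∀ S S' S'' (h : S ≤ S') (h' : S' ≤ S''),
      p S S' h ∘ p S' S'' h' = p S S'' (h.trans h'))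
    {K U : Set (ProjLim X p)} (hK : IsCompact K) (hU : IsOpen U) (hKU : K ⊆ U) :
    ∃ (S : L) (W : Set (X S)), IsOpen W ∧ K ⊆ π p S ⁻¹' W ∧ π p S ⁻¹' W ⊆ U := by
  classical
  have hcyl : ∀ x : ProjLim X p, x ∈ K →
      ∃ (S : L) (W : Set (X S)), IsOpen W ∧ x ∈ π p S ⁻¹' W ∧ π p S ⁻¹' W ⊆ U :=
    fun x hx => exists_cylinder_mem hp_cont hU (hKU hx)
  choose! Sx Wx hWo hxW hWU using hcyl
  obtain ⟨T, hT⟩ := hK.elim_finite_subcover (fun x : K => π p (Sx x.1) ⁻¹' Wx x.1)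
    (fun x => (hWo x.1 x.2).preimage (π_cont (Sx x.1)))
    (fun x hx => Set.mem_iUnion.mpr ⟨⟨x, hx⟩, hxW x hx⟩)
  obtain ⟨S, hS⟩ := (T.image fun x : K => Sx x.1).exists_le
  have hS' : ∀ x : K, x ∈ T → Sx x.1 ≤ S := fun x hx =>
    hS _ (Finset.mem_image_of_mem _ hx)
  refine ⟨S, ⋃ (x : {x : K // x ∈ T}), p (Sx x.1.1) S (hS' x.1 x.2) ⁻¹' Wx x.1.1, ?_, ?_, ?_⟩
  · exact isOpen_iUnion fun x => (hWo x.1.1 x.1.2).preimage (hp_cont _ S (hS' x.1 x.2))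
  · intro y hy
    obtain ⟨x, hxT, hyx⟩ := Set.mem_iUnion₂.mp (hT hy)
    refine Set.mem_preimage.mpr (Set.mem_iUnion.mpr ⟨⟨x, hxT⟩, ?_⟩)
    rw [Set.mem_preimage, compat (hS' x hxT) y]
    exact hyx
  · intro z hz
    obtain ⟨x, hx⟩ := Set.mem_iUnion.mp (Set.mem_preimage.mp hz)
    rw [Set.mem_preimage, compat (hS' x.1 x.2) z] at hx
    exact hWU x.1.1 x.1.2 hx

end Cyl

section Meas

open TopologicalSpace

variable [Nonempty L] [∀ S, CompactSpace (X S)] [∀ S, T2Space (X S)] [∀ S, Nonempty (X S)]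
    [∀ S, MeasurableSpace (X S)] [∀ S, BorelSpace (X S)]

/-- Cylindrical open covers of a set `K` in the projective limit. -/
def CylCov (p : ∀ S S', S ≤ S' → X S' → X S) (K : Set (ProjLim X p)) : Type _ :=
  Σ S : L, {W : Set (X S) // IsOpen W ∧ K ⊆ π p S ⁻¹' W}

instance (K : Set (ProjLim X p)) : Nonempty (CylCov p K) :=
  ⟨⟨Classical.arbitrary L, Set.univ, isOpen_univ, by simp⟩⟩

variable (μS : ∀ S : L, Measure (X S))

/-- The would-be outer content: infimum of cylinder cover measures. -/
noncomputable def lam0 (p : ∀ S S', S ≤ S' → X S' → X S) (K : Set (ProjLim X p)) : ℝ≥0∞ :=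
  ⨅ c : CylCov p K, μS c.1 c.2.1

lemma lam0_le {K : Set (ProjLim X p)} (c : CylCov p K) : lam0 μS p K ≤ μS c.1 c.2.1 :=
  iInf_le _ c

lemma lam0_mono {K₁ K₂ : Set (ProjLim X p)} (h : K₁ ⊆ K₂) : lam0 μS p K₁ ≤ lam0 μS p K₂ :=
  le_iInf fun c => iInf_le_of_le ⟨c.1, c.2.1, c.2.2.1, h.trans c.2.2.2⟩ le_rfl

lemma lam0_le_one (hprob : ∀ S, IsProbabilityMeasure (μS S)) (K : Set (ProjLim X p)) :
    lam0 μS p K ≤ 1 := by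
  refine (lam0_le μS (⟨Classical.arbitrary L, Set.univ, isOpen_univ, by simp⟩ : CylCov p K)).trans ?_
  haveI := hprob (Classical.arbitrary L)
  simp

lemma lam0_ne_top (hprob : ∀ S, IsProbabilityMeasure (μS S)) (K : Set (ProjLim X p)) :
    lam0 μS p K ≠ ⊤ :=
  ((lam0_le_one μS hprob K).trans_lt ENNReal.one_lt_top).ne

variable (hp_cont : ∀ S S' (h : S ≤ S'), Continuous (p S S' h))
    (hcons : ∀ (S S' : L) (h : S ≤ S'), (μS S').map (p S S' h) = μS S)

include hp_cont hcons in
lemma transfer {S S' : L} (h : S ≤ S') {A : Set (X S)} (hA : MeasurableSet A) :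
    μS S' (p S S' h ⁻¹' A) = μS S A := by
  rw [← hcons S S' h, Measure.map_apply (hp_cont S S' h).measurable hA]

include hp_cont hcons in
lemma lam0_union_le (K₁ K₂ : Set (ProjLim X p)) :
    lam0 μS p (K₁ ∪ K₂) ≤ lam0 μS p K₁ + lam0 μS p K₂ := by
  have hsum : lam0 μS p K₁ + lam0 μS p K₂
      = ⨅ (c₁ : CylCov p K₁) (c₂ : CylCov p K₂), μS c₁.1 c₁.2.1 + μS c₂.1 c₂.2.1 := by
    rw [lam0, lam0, ENNReal.iInf_add]
    exact iInf_congr fun c₁ => ENNReal.add_iInf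
  rw [hsum]
  refine le_iInf fun c₁ => le_iInf fun c₂ => ?_
  obtain ⟨S, h₁, h₂⟩ := directed_of (· ≤ ·) c₁.1 c₂.1
  have hcover : K₁ ∪ K₂ ⊆ π p S ⁻¹' (p c₁.1 S h₁ ⁻¹' c₁.2.1 ∪ p c₂.1 S h₂ ⁻¹' c₂.2.1) := by
    rintro x (hx | hx)
    · exact Or.inl (by rw [Set.mem_preimage, compat h₁ x]; exact c₁.2.2.2 hx)
    · exact Or.inr (by rw [Set.mem_preimage, compat h₂ x]; exact c₂.2.2.2 hx)
  calc lam0 μS p (K₁ ∪ K₂)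
      ≤ μS S (p c₁.1 S h₁ ⁻¹' c₁.2.1 ∪ p c₂.1 S h₂ ⁻¹' c₂.2.1) :=
        lam0_le μS ⟨S, _, ((c₁.2.2.1.preimage (hp_cont _ _ h₁)).union
          (c₂.2.2.1.preimage (hp_cont _ _ h₂))), hcover⟩
    _ ≤ μS S (p c₁.1 S h₁ ⁻¹' c₁.2.1) + μS S (p c₂.1 S h₂ ⁻¹' c₂.2.1) := measure_union_le _ _
    _ = μS c₁.1 c₁.2.1 + μS c₂.1 c₂.2.1 := by
        rw [transfer μS hp_cont hcons h₁ c₁.2.2.1.measurableSet,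
          transfer μS hp_cont hcons h₂ c₂.2.2.1.measurableSet]

variable (hp_surj : ∀ S S' (h : S ≤ S'), Function.Surjective (p S S' h))
    (hp_id : ∀ S, p S S le_rfl = id)
    (hp_comp : ∀ S S' S'' (h : S ≤ S') (h' : S' ≤ S''),
      p S S' h ∘ p S' S'' h' = p S S'' (h.trans h'))

include hp_cont hcons hp_surj hp_id hp_comp in
lemma lam0_preimage_compact_ge (S : L) {C : Set (X S)} (hC : IsCompact C) :
    μS S C ≤ lam0 μS p (π p S ⁻¹' C) := by
  refine le_iInf fun c => ?_
  obtain ⟨S'', h₁, h₂⟩ := directed_of (· ≤ ·) S c.1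
  have hsub : p S S'' h₁ ⁻¹' C ⊆ p c.1 S'' h₂ ⁻¹' c.2.1 := by
    intro y hy
    obtain ⟨x, rfl⟩ := π_surj hp_cont hp_surj hp_id hp_comp S'' y
    have hxC : x ∈ π p S ⁻¹' C := by
      rw [Set.mem_preimage, ← compat h₁ x]; exact hy
    have := c.2.2.2 hxC
    rw [Set.mem_preimage, ← compat h₂ x] at this
    exact this
  calc μS S C = μS S'' (p S S'' h₁ ⁻¹' C) :=
        (transfer μS hp_cont hcons h₁ hC.isClosed.measurableSet).symm
    _ ≤ μS S'' (p c.1 S'' h₂ ⁻¹' c.2.1) := measure_mono hsub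
    _ = μS c.1 c.2.1 := transfer μS hp_cont hcons h₂ c.2.2.1.measurableSet

include hp_cont hcons hp_surj hp_id hp_comp in
lemma lam0_disjoint_ge {K₁ K₂ : Set (ProjLim X p)} (hK₁ : IsCompact K₁) (hK₂ : IsCompact K₂)
    (hdis : Disjoint K₁ K₂) :
    lam0 μS p K₁ + lam0 μS p K₂ ≤ lam0 μS p (K₁ ∪ K₂) := by
  haveI : T2Space (ProjLim X p) := plT2
  obtain ⟨U₁, U₂, hU₁, hU₂, hKU₁, hKU₂, hdisU⟩ :=
    SeparatedNhds.of_isCompact_isCompact hK₁ hK₂ hdis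
  obtain ⟨S₁, W₁, hW₁, hKW₁, hWU₁⟩ := exists_cylinder hp_cont hp_comp hK₁ hU₁ hKU₁
  obtain ⟨S₂, W₂, hW₂, hKW₂, hWU₂⟩ := exists_cylinder hp_cont hp_comp hK₂ hU₂ hKU₂
  obtain ⟨S, hS₁, hS₂⟩ := directed_of (· ≤ ·) S₁ S₂
  set V₁ : Set (X S) := p S₁ S hS₁ ⁻¹' W₁ with hV₁def
  set V₂ : Set (X S) := p S₂ S hS₂ ⁻¹' W₂ with hV₂def
  have hpre₁ : π p S ⁻¹' V₁ = π p S₁ ⁻¹' W₁ := by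
    ext x; simp only [hV₁def, Set.mem_preimage, compat hS₁ x]
  have hpre₂ : π p S ⁻¹' V₂ = π p S₂ ⁻¹' W₂ := by
    ext x; simp only [hV₂def, Set.mem_preimage, compat hS₂ x]
  have hdisV : Disjoint V₁ V₂ := by
    rw [Set.disjoint_left]
    intro w hw₁ hw₂
    obtain ⟨x, rfl⟩ := π_surj hp_cont hp_surj hp_id hp_comp S w
    have hx₁ : x ∈ π p S ⁻¹' V₁ := hw₁
    have hx₂ : x ∈ π p S ⁻¹' V₂ := hw₂
    rw [hpre₁] at hx₁; rw [hpre₂] at hx₂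
    exact Set.disjoint_left.mp hdisU (hWU₁ hx₁) (hWU₂ hx₂)
  refine le_iInf fun c => ?_
  obtain ⟨S', hSS', hcS'⟩ := directed_of (· ≤ ·) S c.1
  set A₁ : Set (X S') := p S S' hSS' ⁻¹' V₁ ∩ p c.1 S' hcS' ⁻¹' c.2.1 with hA₁def
  set A₂ : Set (X S') := p S S' hSS' ⁻¹' V₂ ∩ p c.1 S' hcS' ⁻¹' c.2.1 with hA₂def
  have hV₁o : IsOpen V₁ := hW₁.preimage (hp_cont _ _ hS₁)
  have hV₂o : IsOpen V₂ := hW₂.preimage (hp_cont _ _ hS₂)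
  have hA₁o : IsOpen A₁ := (hV₁o.preimage (hp_cont _ _ hSS')).inter
    (c.2.2.1.preimage (hp_cont _ _ hcS'))
  have hA₂o : IsOpen A₂ := (hV₂o.preimage (hp_cont _ _ hSS')).inter
    (c.2.2.1.preimage (hp_cont _ _ hcS'))
  have hcov₁ : K₁ ⊆ π p S' ⁻¹' A₁ := by
    intro x hx
    refine Set.mem_preimage.mpr ⟨?_, ?_⟩
    · rw [Set.mem_preimage, compat hSS' x]
      have : x ∈ π p S ⁻¹' V₁ := by rw [hpre₁]; exact hKW₁ hx
      exact this
    · rw [Set.mem_preimage, compat hcS' x]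
      exact c.2.2.2 (Or.inl hx)
  have hcov₂ : K₂ ⊆ π p S' ⁻¹' A₂ := by
    intro x hx
    refine Set.mem_preimage.mpr ⟨?_, ?_⟩
    · rw [Set.mem_preimage, compat hSS' x]
      have : x ∈ π p S ⁻¹' V₂ := by rw [hpre₂]; exact hKW₂ hx
      exact this
    · rw [Set.mem_preimage, compat hcS' x]
      exact c.2.2.2 (Or.inr hx)
  have hdisA : Disjoint A₁ A₂ :=
    (hdisV.preimage (p S S' hSS')).mono Set.inter_subset_left Set.inter_subset_left
  calc lam0 μS p K₁ + lam0 μS p K₂ ≤ μS S' A₁ + μS S' A₂ :=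
        add_le_add (lam0_le μS ⟨S', A₁, hA₁o, hcov₁⟩) (lam0_le μS ⟨S', A₂, hA₂o, hcov₂⟩)
    _ = μS S' (A₁ ∪ A₂) := (measure_union hdisA hA₂o.measurableSet).symm
    _ ≤ μS S' (p c.1 S' hcS' ⁻¹' c.2.1) :=
        measure_mono (Set.union_subset Set.inter_subset_right Set.inter_subset_right)
    _ = μS c.1 c.2.1 := transfer μS hp_cont hcons hcS' c.2.2.1.measurableSet

variable (hprob : ∀ S, IsProbabilityMeasure (μS S))

/-- The content on the projective limit induced by the consistent family. -/
noncomputable def plContent : Content (ProjLim X p) where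
  toFun K := (lam0 μS p K).toNNReal
  mono' K₁ K₂ h := ENNReal.toNNReal_mono (lam0_ne_top (p := p) μS hprob ↑K₂) (lam0_mono μS h)
  sup_disjoint' K₁ K₂ hdis _ _ := by
    have h₁ := lam0_union_le μS hp_cont hcons (K₁ : Set (ProjLim X p)) K₂
    have h₂ := lam0_disjoint_ge μS hp_cont hcons hp_surj hp_id hp_comp K₁.2 K₂.2 hdis
    have heq : lam0 μS p ((K₁ : Set (ProjLim X p)) ∪ ↑K₂)
        = lam0 μS p ↑K₁ + lam0 μS p ↑K₂ := le_antisymm h₁ h₂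
    show (lam0 μS p ↑(K₁ ⊔ K₂)).toNNReal
        = (lam0 μS p ↑K₁).toNNReal + (lam0 μS p ↑K₂).toNNReal
    have hco : ((K₁ ⊔ K₂ : Compacts (ProjLim X p)) : Set (ProjLim X p)) = ↑K₁ ∪ ↑K₂ := rfl
    rw [hco, heq, ENNReal.toNNReal_add (lam0_ne_top μS hprob _) (lam0_ne_top μS hprob _)]
  sup_le' K₁ K₂ := by
    have h₁ := lam0_union_le μS hp_cont hcons (K₁ : Set (ProjLim X p)) K₂
    show (lam0 μS p ↑(K₁ ⊔ K₂)).toNNReal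
        ≤ (lam0 μS p ↑K₁).toNNReal + (lam0 μS p ↑K₂).toNNReal
    have hco : ((K₁ ⊔ K₂ : Compacts (ProjLim X p)) : Set (ProjLim X p)) = ↑K₁ ∪ ↑K₂ := rfl
    rw [hco, ← ENNReal.toNNReal_add (lam0_ne_top μS hprob _) (lam0_ne_top μS hprob _)]
    exact ENNReal.toNNReal_mono
      (ENNReal.add_ne_top.mpr ⟨lam0_ne_top μS hprob _, lam0_ne_top μS hprob _⟩) h₁

lemma plContent_apply (K : Compacts (ProjLim X p)) :
    (plContent μS hp_cont hcons hp_surj hp_id hp_comp hprob) K = lam0 μS p K :=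
  ENNReal.coe_toNNReal (lam0_ne_top μS hprob _)

variable (hregS : ∀ S, (μS S).Regular)
variable [MeasurableSpace (ProjLim X p)] [BorelSpace (ProjLim X p)]

include hp_cont hcons hp_surj hp_id hp_comp hprob hregS in
lemma plMeasure_cyl [T2Space (ProjLim X p)] (S : L) {W : Set (X S)} (hW : IsOpen W) :
    (plContent μS hp_cont hcons hp_surj hp_id hp_comp hprob).measure (π p S ⁻¹' W) = μS S W := by
  haveI : CompactSpace (ProjLim X p) := plCompact hp_cont
  have hWo : IsOpen (π p S ⁻¹' W) := hW.preimage (π_cont S)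
  rw [Content.measure_apply _ hWo.measurableSet, Content.outerMeasure_of_isOpen _ _ hWo]
  apply le_antisymm
  · refine iSup₂_le fun K hK => ?_
    rw [plContent_apply]
    exact lam0_le μS ⟨S, W, hW, hK⟩
  · refine le_of_forall_lt fun r hr => ?_
    obtain ⟨C, hCW, hCc, hrC⟩ := (hregS S).innerRegular hW r hr
    have hKcl : IsClosed (π p S ⁻¹' C) := hCc.isClosed.preimage (π_cont S)
    have hKc : IsCompact (π p S ⁻¹' C) := hKcl.isCompact
    refine lt_of_lt_of_le (lt_of_lt_of_le hrC
      (lam0_preimage_compact_ge μS hp_cont hcons hp_surj hp_id hp_comp S hCc)) ?_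
    refine le_trans ?_ (Content.le_innerContent _ (⟨π p S ⁻¹' C, hKc⟩ :
      Compacts (ProjLim X p)) ⟨π p S ⁻¹' W, hWo⟩ (fun _ hx => hCW hx))
    exact le_of_eq (plContent_apply μS hp_cont hcons hp_surj hp_id hp_comp hprob
      ⟨π p S ⁻¹' C, hKc⟩).symm

end Meas

end ProjLimAux

theorem exists_unique_measure_of_consistent_family
    {L : Type*} [PartialOrder L] [IsDirected L (· ≤ ·)]
    (X : L → Type*) [∀ S, TopologicalSpace (X S)]
    [∀ S, CompactSpace (X S)] [∀ S, T2Space (X S)] [∀ S, Nonempty (X S)]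
    [∀ S, MeasurableSpace (X S)] [∀ S, BorelSpace (X S)]
    (p : ∀ S S', S ≤ S' → X S' → X S)
    (hp_cont : ∀ S S' (h : S ≤ S'), Continuous (p S S' h))
    (hp_surj : ∀ S S' (h : S ≤ S'), Function.Surjective (p S S' h))
    (hp_id : ∀ S, p S S le_rfl = id)
    (hp_comp : ∀ S S' S'' (h : S ≤ S') (h' : S' ≤ S''),
      p S S' h ∘ p S' S'' h' = p S S'' (h.trans h'))
    [MeasurableSpace (ProjLim X p)] [BorelSpace (ProjLim X p)]
    (μS : ∀ S : L, Measure (X S))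
    (hprob : ∀ S, IsProbabilityMeasure (μS S))
    (hregS : ∀ S, (μS S).Regular)
    (hcons : ∀ (S S' : L) (h : S ≤ S'), (μS S').map (p S S' h) = μS S) :
    ∃! μ : Measure (ProjLim X p),
      IsProbabilityMeasure μ ∧ μ.Regular ∧
        ∀ S : L, μ.map (fun x : ProjLim X p => x.1 S) = μS S := by
  classical
  obtain hL | hL := isEmpty_or_nonempty L
  · -- degenerate case: `L` is empty and the projective limit is a one-point space
    haveI : Subsingleton (ProjLim X p) :=
      ⟨fun a b => Subtype.ext (funext fun S => isEmptyElim S)⟩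
    haveI : Nonempty (ProjLim X p) :=
      ⟨⟨fun S => isEmptyElim S, fun S => isEmptyElim S⟩⟩
    have hreg : ∀ ν : Measure (ProjLim X p), IsProbabilityMeasure ν → ν.Regular := by
      intro ν hν
      haveI := hν
      refine { toIsFiniteMeasureOnCompacts := inferInstance,
               toOuterRegular := ⟨fun A _ r hr => ?_⟩,
               innerRegular := fun U _ r hr =>
                 ⟨U, subset_rfl, Set.subsingleton_of_subsingleton.isCompact, hr⟩ }
      rcases A.eq_empty_or_nonempty with rfl | hne
      · exact ⟨∅, subset_rfl, isOpen_empty, by simpa using hr⟩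
      · have hA : A = Set.univ := Set.eq_univ_of_forall fun y => by
          obtain ⟨z, hz⟩ := hne
          rwa [Subsingleton.elim y z]
        exact ⟨Set.univ, by rw [hA], isOpen_univ, by rwa [← hA]⟩
    have huniq : ∀ ν₁ ν₂ : Measure (ProjLim X p),
        IsProbabilityMeasure ν₁ → IsProbabilityMeasure ν₂ → ν₁ = ν₂ := by
      intro ν₁ ν₂ h₁ h₂
      ext s hs
      rcases s.eq_empty_or_nonempty with rfl | hne
      · simp
      · have hsu : s = Set.univ := Set.eq_univ_of_forall fun y => by
          obtain ⟨z, hz⟩ := hne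
          rwa [Subsingleton.elim y z]
        rw [hsu, h₁.measure_univ, h₂.measure_univ]
    refine ⟨Measure.dirac (Classical.arbitrary _), ⟨inferInstance,
      hreg _ inferInstance, fun S => isEmptyElim S⟩, ?_⟩
    rintro ν ⟨hν1, -, -⟩
    exact huniq ν _ hν1 inferInstance
  · haveI := hL
    haveI : T2Space (ProjLim X p) := ProjLimAux.plT2
    haveI : CompactSpace (ProjLim X p) := ProjLimAux.plCompact hp_cont
    set μC := ProjLimAux.plContent μS hp_cont hcons hp_surj hp_id hp_comp hprob with hμCdef
    have hcyl : ∀ (S : L) (W : Set (X S)), IsOpen W →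
        μC.measure (ProjLimAux.π p S ⁻¹' W) = μS S W := fun S W hW =>
      ProjLimAux.plMeasure_cyl μS hp_cont hcons hp_surj hp_id hp_comp hprob hregS S hW
    have hCreg : μC.measure.Regular := μC.regular
    have huniv : μC.measure Set.univ = 1 := by
      have h := hcyl (Classical.arbitrary L) Set.univ isOpen_univ
      rw [Set.preimage_univ] at h
      rw [h]
      exact (hprob _).measure_univ
    have hCprob : IsProbabilityMeasure μC.measure := ⟨huniv⟩
    have hmap : ∀ S, μC.measure.map (ProjLimAux.π p S) = μS S := by
      intro S
      haveI := hprob S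
      refine (ext_of_generate_finite {s : Set (X S) | IsOpen s}
        BorelSpace.measurable_eq isPiSystem_isOpen ?_ ?_).symm
      · intro s hs
        rw [Measure.map_apply (ProjLimAux.π_cont S).measurable hs.measurableSet]
        exact (hcyl S s hs).symm
      · rw [Measure.map_apply (ProjLimAux.π_cont S).measurable MeasurableSet.univ,
          Set.preimage_univ, huniv, (hprob S).measure_univ]
    have hle : ∀ ν₁ ν₂ : Measure (ProjLim X p), ν₁.Regular →
        (∀ S, ν₁.map (ProjLimAux.π p S) = μS S) →
        (∀ S, ν₂.map (ProjLimAux.π p S) = μS S) →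
        ∀ U : Set (ProjLim X p), IsOpen U → ν₁ U ≤ ν₂ U := by
      intro ν₁ ν₂ hreg h₁ h₂ U hU
      refine le_of_forall_lt fun r hr => ?_
      obtain ⟨K, hKU, hKc, hrK⟩ := hreg.innerRegular hU r hr
      obtain ⟨S, W, hW, hKW, hWU⟩ := ProjLimAux.exists_cylinder hp_cont hp_comp hKc hU hKU
      have e₁ : ν₁ (ProjLimAux.π p S ⁻¹' W) = μS S W := by
        rw [← h₁ S, Measure.map_apply (ProjLimAux.π_cont S).measurable hW.measurableSet]
      have e₂ : ν₂ (ProjLimAux.π p S ⁻¹' W) = μS S W := by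
        rw [← h₂ S, Measure.map_apply (ProjLimAux.π_cont S).measurable hW.measurableSet]
      calc r < ν₁ K := hrK
        _ ≤ ν₁ (ProjLimAux.π p S ⁻¹' W) := measure_mono hKW
        _ = ν₂ (ProjLimAux.π p S ⁻¹' W) := by rw [e₁, e₂]
        _ ≤ ν₂ U := measure_mono hWU
    refine ⟨μC.measure, ⟨hCprob, hCreg, fun S => hmap S⟩, ?_⟩
    rintro ν ⟨hν1, hν2, hν3⟩
    haveI := hν1
    have hν3' : ∀ S, ν.map (ProjLimAux.π p S) = μS S := fun S => hν3 S
    exact ext_of_generate_finite {s : Set (ProjLim X p) | IsOpen s}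
      BorelSpace.measurable_eq isPiSystem_isOpen
      (fun s hs => le_antisymm (hle ν μC.measure hν2 hν3' hmap s hs)
        (hle μC.measure ν hCreg hmap hν3' s hs))
      (by rw [hν1.measure_univ, hCprob.measure_univ])
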